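/- Let A ∈ ℝ^{m×n} with SVD A = UΣVᵀ and singular values σ₁ ≥ … ≥ σ_p (p = min(m,n)). For 1 ≤ r < p, let U_r and V_r consist of the first r columns of U and V. Then U_r U_rᵀ A = A V_r V_rᵀ = U_r Σ_r V_rᵀ, and this matrix minimizes ‖A − B‖_F over all matrices B of rank at most r. -/

import Mathlib

open Matrix BigOperators

noncomputable def frobNorm {α β : Type*} [Fintype α] [Fintype β]
    (A : Matrix α β ℝ) : ℝ :=
  Real.sqrt (∑ i, ∑ j, (A i j) ^ 2)

namespace EYM

noncomputable def frobSq {α β : Type*} [Fintype α] [Fintype β]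
    (A : Matrix α β ℝ) : ℝ := ∑ i, ∑ j, (A i j) ^ 2

lemma frobSq_nonneg {α β : Type*} [Fintype α] [Fintype β] (A : Matrix α β ℝ) :
    0 ≤ frobSq A :=
  Finset.sum_nonneg fun _ _ => Finset.sum_nonneg fun _ _ => sq_nonneg _

lemma frobNorm_mono {α β : Type*} [Fintype α] [Fintype β] {A B : Matrix α β ℝ}
    (h : frobSq A ≤ frobSq B) : frobNorm A ≤ frobNorm B :=
  Real.sqrt_le_sqrt h

lemma frobSq_eq_trace {α β : Type*} [Fintype α] [Fintype β] (A : Matrix α β ℝ) :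
    frobSq A = (Aᵀ * A).trace := by
  simp only [frobSq, Matrix.trace, Matrix.diag, Matrix.mul_apply, Matrix.transpose_apply,
    pow_two]
  rw [Finset.sum_comm]

lemma frobSq_add {α β : Type*} [Fintype α] [Fintype β] (X Y : Matrix α β ℝ)
    (h : Xᵀ * Y = 0) : frobSq (X + Y) = frobSq X + frobSq Y := by
  have h' : Yᵀ * X = 0 := by
    have := congrArg Matrix.transpose h
    simpa [Matrix.transpose_mul] using this
  rw [frobSq_eq_trace, frobSq_eq_trace, frobSq_eq_trace]
  rw [Matrix.transpose_add, Matrix.add_mul, Matrix.mul_add, Matrix.mul_add, h, h']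
  simp [Matrix.trace_add]

lemma trace_conj {a b : ℕ} (W : Matrix (Fin a) (Fin b) ℝ) (h : Wᵀ * W = 1)
    (X : Matrix (Fin b) (Fin b) ℝ) : (W * X * Wᵀ).trace = X.trace := by
  rw [Matrix.trace_mul_comm, ← Matrix.mul_assoc, h, Matrix.one_mul]

lemma frobSq_conj {a b p : ℕ} (W1 : Matrix (Fin a) (Fin p) ℝ) (W2 : Matrix (Fin b) (Fin p) ℝ)
    (h1 : W1ᵀ * W1 = 1) (h2 : W2ᵀ * W2 = 1) (X : Matrix (Fin p) (Fin p) ℝ) :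
    frobSq (W1 * X * W2ᵀ) = (Xᵀ * X).trace := by
  rw [frobSq_eq_trace]
  have e1 : (W1 * X * W2ᵀ)ᵀ * (W1 * X * W2ᵀ) = W2 * (Xᵀ * X) * W2ᵀ := by
    simp only [Matrix.transpose_mul, Matrix.transpose_transpose, Matrix.mul_assoc]
    rw [← Matrix.mul_assoc W1ᵀ W1, h1, Matrix.one_mul]
  rw [e1, trace_conj _ h2]

/-- delta matrix of an injection -/
def delta {a b : ℕ} (f : Fin b → Fin a) : Matrix (Fin a) (Fin b) ℝ :=
  Matrix.of fun i t => if i = f t then 1 else 0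

lemma mul_delta {a b c : ℕ} (M : Matrix (Fin c) (Fin a) ℝ) (f : Fin b → Fin a) :
    M * delta f = M.submatrix id f := by
  ext x t
  simp [delta, Matrix.mul_apply]

lemma delta_tr_mul {a b c : ℕ} (f : Fin b → Fin a) (M : Matrix (Fin a) (Fin c) ℝ) :
    (delta f)ᵀ * M = M.submatrix f id := by
  ext t x
  simp [delta, Matrix.mul_apply]

lemma delta_tr_delta {a b : ℕ} (f : Fin b → Fin a) (hf : Function.Injective f) :
    (delta f)ᵀ * delta f = 1 := by
  rw [delta_tr_mul]
  ext t t'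
  simp only [Matrix.submatrix_apply, delta, Matrix.of_apply, Matrix.one_apply, id]
  by_cases h : t = t' <;> simp [h, hf.eq_iff]

lemma quad_nonneg {a : ℕ} {P : Matrix (Fin a) (Fin a) ℝ} (hsym : Pᵀ = P)
    (hidem : P * P = P) (c : Fin a → ℝ) : 0 ≤ c ⬝ᵥ (P *ᵥ c) := by
  have : c ⬝ᵥ (P *ᵥ c) = (P *ᵥ c) ⬝ᵥ (P *ᵥ c) := by
    conv_lhs => rw [← hidem]
    rw [← Matrix.mulVec_mulVec, Matrix.dotProduct_mulVec]
    congr 1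
    rw [← Matrix.mulVec_transpose, hsym]
  rw [this]
  exact Finset.sum_nonneg fun i _ => mul_self_nonneg _

lemma quad_le {a : ℕ} {P : Matrix (Fin a) (Fin a) ℝ} (hsym : Pᵀ = P)
    (hidem : P * P = P) (c : Fin a → ℝ) : c ⬝ᵥ (P *ᵥ c) ≤ c ⬝ᵥ c := by
  have hsym' : (1 - P)ᵀ = 1 - P := by simp [Matrix.transpose_sub, hsym]
  have hidem' : (1 - P) * (1 - P) = 1 - P := by
    simp [Matrix.sub_mul, Matrix.mul_sub, hidem]
  have h := quad_nonneg hsym' hidem' c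
  rw [Matrix.sub_mulVec, dotProduct_sub, Matrix.one_mulVec] at h
  linarith

lemma diag_conj {a b : ℕ} (W : Matrix (Fin a) (Fin b) ℝ) (P : Matrix (Fin a) (Fin a) ℝ)
    (t : Fin b) : (Wᵀ * P * W) t t = (fun x => W x t) ⬝ᵥ (P *ᵥ fun x => W x t) := by
  simp only [Matrix.mul_apply, Matrix.transpose_apply, dotProduct, Matrix.mulVec,
    Finset.sum_mul, Finset.mul_sum]
  rw [Finset.sum_comm]
  congr 1; ext i; congr 1; ext k; ring


lemma delta_comp {a b c : ℕ} (f : Fin b → Fin a) (g : Fin c → Fin b) :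
    delta f * delta g = delta (f ∘ g) := by
  ext i k
  simp [delta, Matrix.mul_apply, Function.comp]

lemma master {a b q : ℕ} (hqa : q ≤ a) (hqb : q ≤ b) (d : Fin q → ℝ) :
    delta (Fin.castLE hqa) * Matrix.diagonal d * (delta (Fin.castLE hqb))ᵀ
    = Matrix.of (fun (i : Fin a) (j : Fin b) =>
        if h : (i : ℕ) = (j : ℕ) ∧ (i : ℕ) < q then d ⟨(i : ℕ), h.2⟩ else 0) := by
  ext i j
  have expand : (delta (Fin.castLE hqa) * Matrix.diagonal d * (delta (Fin.castLE hqb))ᵀ) i j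
      = ∑ t, (if i = Fin.castLE hqa t then 1 else 0) * d t
          * (if j = Fin.castLE hqb t then 1 else 0) := by
    rw [Matrix.mul_apply]
    apply Finset.sum_congr rfl
    intro t _
    rw [Matrix.mul_diagonal, Matrix.transpose_apply]
    rfl
  rw [expand]
  simp only [Matrix.of_apply]
  by_cases hcond : (i : ℕ) = (j : ℕ) ∧ (i : ℕ) < q
  · rw [Finset.sum_eq_single (⟨(i : ℕ), hcond.2⟩ : Fin q)]
    · have h1 : i = Fin.castLE hqa ⟨(i : ℕ), hcond.2⟩ := by
        apply Fin.ext; simp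
      have h2 : j = Fin.castLE hqb ⟨(i : ℕ), hcond.2⟩ := by
        apply Fin.ext; simp [← hcond.1]
      rw [if_pos h1, if_pos h2, dif_pos hcond]
      ring
    · intro t _ ht
      rcases eq_or_ne i (Fin.castLE hqa t) with h1 | h1
      · exfalso; apply ht; apply Fin.ext
        simpa using (congrArg Fin.val h1).symm
      · rw [if_neg h1]; ring
    · intro h; exact absurd (Finset.mem_univ _) h
  · rw [dif_neg hcond]
    apply Finset.sum_eq_zero
    intro t _
    rcases eq_or_ne i (Fin.castLE hqa t) with h1 | h1
    · rcases eq_or_ne j (Fin.castLE hqb t) with h2 | h2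
      · exfalso; apply hcond
        have e1 : (i : ℕ) = (t : ℕ) := by simpa using congrArg Fin.val h1
        have e2 : (j : ℕ) = (t : ℕ) := by simpa using congrArg Fin.val h2
        exact ⟨by omega, by omega⟩
      · rw [if_neg h2]; ring
    · rw [if_neg h1]; ring

/-- Existence of an orthogonal projection matrix onto the column space of `B`. -/
lemma exists_proj {m n : ℕ} (B : Matrix (Fin m) (Fin n) ℝ) {r : ℕ} (hB : B.rank ≤ r) :
    ∃ P : Matrix (Fin m) (Fin m) ℝ,
      Pᵀ = P ∧ P * P = P ∧ P.trace ≤ (r : ℝ) ∧ P * B = B := by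
  classical
  set E := EuclideanSpace ℝ (Fin m)
  let e : E ≃ₗ[ℝ] (Fin m → ℝ) := WithLp.linearEquiv 2 ℝ (Fin m → ℝ)
  let K : Submodule ℝ E := (LinearMap.range B.mulVecLin).map (e.symm : (Fin m → ℝ) →ₗ[ℝ] E)
  have hK : Module.finrank ℝ K = B.rank := by
    rw [Matrix.rank]
    exact e.symm.finrank_map_eq (LinearMap.range B.mulVecLin)
  let d := Module.finrank ℝ K
  have hd : (d : ℝ) ≤ (r : ℝ) := by
    have : d ≤ r := by rw [show d = B.rank from hK]; exact hB
    exact_mod_cast this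
  let b := stdOrthonormalBasis ℝ K
  let Q : Matrix (Fin m) (Fin d) ℝ := Matrix.of fun i k => e ((b k : E)) i
  have hQ : Qᵀ * Q = 1 := by
    ext k l
    have horth := orthonormal_iff_ite.mp b.orthonormal k l
    rw [Submodule.coe_inner] at horth
    rw [PiLp.inner_apply] at horth
    simp only [RCLike.inner_apply, starRingEnd_apply, star_trivial] at horth
    simp only [Matrix.mul_apply, Matrix.transpose_apply, Matrix.one_apply, Q, Matrix.of_apply]
    rw [← horth]
    exact Finset.sum_congr rfl fun _ _ => mul_comm _ _
  refine ⟨Q * Qᵀ, by rw [Matrix.transpose_mul, Matrix.transpose_transpose], ?_, ?_, ?_⟩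
  · rw [Matrix.mul_assoc, ← Matrix.mul_assoc Qᵀ Q Qᵀ, hQ, Matrix.one_mul]
  · rw [Matrix.trace_mul_comm, hQ, Matrix.trace_one]
    simpa using hd
  · -- P fixes columns of B
    have key : ∀ w : K, (Q * Qᵀ) *ᵥ (e (w : E)) = e (w : E) := by
      intro w
      have hw : (w : E) = ∑ k, b.repr w k • (b k : E) := by
        conv_lhs => rw [← b.sum_repr w]
        push_cast [Submodule.coe_sum]
        rfl
      have hv : e (w : E) = Q *ᵥ (fun k => b.repr w k) := by
        funext i
        rw [hw]
        rw [map_sum]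
        simp only [Matrix.mulVec, dotProduct, Q, Matrix.of_apply, Finset.sum_apply]
        congr 1; ext k
        rw [_root_.map_smul, Pi.smul_apply, smul_eq_mul, mul_comm]
      rw [hv, Matrix.mulVec_mulVec, Matrix.mul_assoc, hQ, Matrix.mul_one]
    ext i j
    have hcol : ∃ w : K, ∀ i', e (w : E) i' = B i' j := by
      refine ⟨⟨e.symm (B *ᵥ Pi.single j 1),
        Submodule.mem_map_of_mem ⟨Pi.single j 1, by simp [Matrix.mulVecLin_apply]⟩⟩,
        fun i' => ?_⟩
      simp only [LinearEquiv.apply_symm_apply]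
      simp [Matrix.mulVec, dotProduct, Pi.single_apply]
    obtain ⟨w, hw⟩ := hcol
    have := congrFun (key w) i
    simp only [Matrix.mulVec, dotProduct] at this ⊢
    rw [Matrix.mul_apply]
    calc ∑ k, (Q * Qᵀ) i k * B k j = ∑ k, (Q * Qᵀ) i k * e (w : E) k := by
          simp_rw [hw]
        _ = e (w : E) i := this
        _ = B i j := hw i

/-- the combinatorial bound -/
lemma comb {p r : ℕ} (hrp : r < p) (s τ : Fin p → ℝ) (hmono : Antitone s)
    (hpos : ∀ i, 0 ≤ s i) (hτ0 : ∀ i, 0 ≤ τ i) (hτ1 : ∀ i, τ i ≤ 1)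
    (hsum : ∑ i, τ i ≤ (r : ℝ)) :
    ∑ i, s i ^ 2 * τ i ≤ ∑ i ∈ Finset.univ.filter (fun i : Fin p => (i : ℕ) < r), s i ^ 2 := by
  classical
  set F := Finset.univ.filter (fun i : Fin p => (i : ℕ) < r) with hF
  set G := Finset.univ.filter (fun i : Fin p => ¬ (i : ℕ) < r) with hG
  set ρ : Fin p := ⟨r, hrp⟩
  have hcard : F.card = r := by
    rw [hF]
    rw [Finset.card_eq_of_bijective (fun k hk => ⟨k, lt_trans hk hrp⟩)]
    · intro a ha
      simp only [Finset.mem_filter, Finset.mem_univ, true_and] at ha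
      exact ⟨a, ha, rfl⟩
    · intro k hk
      simp [hk]
    · intro k k' _ _ h
      simpa using congrArg Fin.val h
  have hsplit : ∑ i, s i ^ 2 * τ i = ∑ i ∈ F, s i ^ 2 * τ i + ∑ i ∈ G, s i ^ 2 * τ i := by
    rw [hF, hG]; exact (Finset.sum_filter_add_sum_filter_not _ _ _).symm
  have hsplitτ : ∑ i, τ i = ∑ i ∈ F, τ i + ∑ i ∈ G, τ i := by
    rw [hF, hG]; exact (Finset.sum_filter_add_sum_filter_not _ _ _).symm
  have hG_le : ∑ i ∈ G, s i ^ 2 * τ i ≤ s ρ ^ 2 * ∑ i ∈ G, τ i := by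
    rw [Finset.mul_sum]
    apply Finset.sum_le_sum
    intro i hi
    simp only [hG, Finset.mem_filter, Finset.mem_univ, true_and, not_lt] at hi
    have hs : s i ≤ s ρ := hmono (by exact_mod_cast hi)
    have : s i ^ 2 ≤ s ρ ^ 2 := by
      apply sq_le_sq' <;> nlinarith [hpos i, hpos ρ]
    exact mul_le_mul_of_nonneg_right this (hτ0 i)
  have hGτ : ∑ i ∈ G, τ i ≤ (r : ℝ) - ∑ i ∈ F, τ i := by linarith [hsplitτ, hsum]
  have hrF : (r : ℝ) = ∑ _i ∈ F, (1 : ℝ) := by simp [hcard]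
  have hfinal : ∑ i ∈ F, s i ^ 2 * τ i + s ρ ^ 2 * ((r : ℝ) - ∑ i ∈ F, τ i)
      ≤ ∑ i ∈ F, s i ^ 2 := by
    rw [hrF, ← Finset.sum_sub_distrib, Finset.mul_sum, ← Finset.sum_add_distrib]
    apply Finset.sum_le_sum
    intro i hi
    simp only [hF, Finset.mem_filter, Finset.mem_univ, true_and] at hi
    have hs : s ρ ≤ s i := hmono (by exact le_of_lt hi)
    have hsq : s ρ ^ 2 ≤ s i ^ 2 := by
      apply sq_le_sq' <;> nlinarith [hpos i, hpos ρ]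
    nlinarith [hτ1 i, hτ0 i]
  have hρ2 : 0 ≤ s ρ ^ 2 := sq_nonneg _
  calc ∑ i, s i ^ 2 * τ i
      = ∑ i ∈ F, s i ^ 2 * τ i + ∑ i ∈ G, s i ^ 2 * τ i := hsplit
    _ ≤ ∑ i ∈ F, s i ^ 2 * τ i + s ρ ^ 2 * ((r:ℝ) - ∑ i ∈ F, τ i) := by
        have := mul_le_mul_of_nonneg_left hGτ hρ2
        linarith [hG_le]
    _ ≤ ∑ i ∈ F, s i ^ 2 := hfinal

end EYM

open EYM

/-- Eckart–Young–Mirsky, projection form: If `A = UΣVᵀ` is an SVD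
with singular values `s` sorted decreasingly and `1 ≤ r < min(m,n)`, then
`U_r U_rᵀ A = A V_r V_rᵀ = U_r Σ_r V_rᵀ` and this matrix minimizes `‖A − B‖_F`
over all `B` of rank at most `r`. -/
theorem stmt9 {m n : ℕ} (r : ℕ) (hr1 : 1 ≤ r) (hrp : r < min m n)
    (A : Matrix (Fin m) (Fin n) ℝ)
    (U : Matrix (Fin m) (Fin m) ℝ) (V : Matrix (Fin n) (Fin n) ℝ)
    (S : Matrix (Fin m) (Fin n) ℝ) (s : Fin (min m n) → ℝ)
    (hU : Uᵀ * U = 1) (hV : Vᵀ * V = 1)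
    (hS : ∀ (i : Fin m) (j : Fin n), S i j =
      if h : (i : ℕ) = (j : ℕ) then s ⟨i, lt_min i.isLt (h ▸ j.isLt)⟩ else 0)
    (hmono : Antitone s) (hpos : ∀ i, 0 ≤ s i)
    (hsvd : A = U * S * Vᵀ)
    (Ur : Matrix (Fin m) (Fin r) ℝ) (Vr : Matrix (Fin n) (Fin r) ℝ)
    (hUr : Ur = U.submatrix id (Fin.castLE (by omega)))
    (hVr : Vr = V.submatrix id (Fin.castLE (by omega))) :
    Ur * Urᵀ * A = A * Vr * Vrᵀ ∧
    Ur * Urᵀ * A =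
      Ur * Matrix.diagonal (fun i : Fin r => s (Fin.castLE hrp.le i)) * Vrᵀ ∧
    ∀ B : Matrix (Fin m) (Fin n) ℝ, B.rank ≤ r →
      frobNorm (A - Ur * Urᵀ * A) ≤ frobNorm (A - B) := by
  classical
  have hpm : min m n ≤ m := min_le_left m n
  have hpn : min m n ≤ n := min_le_right m n
  have hrm : r ≤ m := le_trans hrp.le hpm
  have hrn : r ≤ n := le_trans hrp.le hpn
  set em : Fin (min m n) → Fin m := Fin.castLE hpm with hem
  set en : Fin (min m n) → Fin n := Fin.castLE hpn with hen
  set cm : Fin r → Fin m := Fin.castLE hrm with hcm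
  set cn : Fin r → Fin n := Fin.castLE hrn with hcn
  set c' : Fin r → Fin (min m n) := Fin.castLE hrp.le with hc'
  have hUUt : U * Uᵀ = 1 := mul_eq_one_comm.mp hU
  have hVVt : V * Vᵀ = 1 := mul_eq_one_comm.mp hV
  have hUrD : Ur = U * delta cm := by rw [hUr, mul_delta]
  have hVrD : Vr = V * delta cn := by rw [hVr, mul_delta]
  -- compositions of deltas
  have hcomp_m : delta em * delta c' = delta cm := by
    rw [delta_comp]; rfl
  have hcomp_n : delta en * delta c' = delta cn := by
    rw [delta_comp]; rfl
  -- S in delta form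
  have hS' : S = delta em * Matrix.diagonal s * (delta en)ᵀ := by
    rw [hem, hen, master hpm hpn s]
    ext i j
    rw [hS]
    simp only [Matrix.of_apply]
    by_cases hij : (i : ℕ) = (j : ℕ)
    · have hi : (i : ℕ) < min m n := lt_min i.isLt (hij ▸ j.isLt)
      rw [dif_pos hij, dif_pos ⟨hij, hi⟩]
    · rw [dif_neg hij, dif_neg (fun h => hij h.1)]
  -- diagonal pieces
  set dlow : Fin (min m n) → ℝ := fun t => if (t : ℕ) < r then s t else 0 with hdlow
  set dhigh : Fin (min m n) → ℝ := fun t => if (t : ℕ) < r then 0 else s t with hdhigh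
  set jl : Fin (min m n) → ℝ := fun t => if (t : ℕ) < r then (1 : ℝ) else 0 with hjl
  -- core identities
  have hJlcore : delta c' * (delta c')ᵀ = Matrix.diagonal jl := by
    have h0 : delta c' * (delta c')ᵀ
        = delta c' * Matrix.diagonal (fun _ : Fin r => (1 : ℝ)) * (delta c')ᵀ := by
      rw [Matrix.diagonal_one, Matrix.mul_one]
    rw [h0, hc', master hrp.le hrp.le _]
    ext t t'
    simp only [Matrix.of_apply]
    by_cases h1 : (t : ℕ) = (t' : ℕ)
    · have ht : t = t' := Fin.ext h1
      subst ht
      rw [Matrix.diagonal_apply_eq]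
      by_cases h2 : (t : ℕ) < r
      · rw [dif_pos ⟨rfl, h2⟩]; simp [hjl, h2]
      · rw [dif_neg (fun h => h2 h.2)]; simp [hjl, h2]
    · have ht : t ≠ t' := fun h => h1 (congrArg Fin.val h)
      rw [Matrix.diagonal_apply_ne _ ht, dif_neg (fun h => h1 h.1)]
  have hmidcore : delta c' * Matrix.diagonal (fun i : Fin r => s (Fin.castLE hrp.le i))
      * (delta c')ᵀ = Matrix.diagonal dlow := by
    rw [hc', master hrp.le hrp.le _]
    ext t t'
    simp only [Matrix.of_apply]
    by_cases h1 : (t : ℕ) = (t' : ℕ)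
    · have ht : t = t' := Fin.ext h1
      subst ht
      rw [Matrix.diagonal_apply_eq]
      by_cases h2 : (t : ℕ) < r
      · rw [dif_pos ⟨rfl, h2⟩]
        simp only [hdlow, if_pos h2]
        congr 1
      · rw [dif_neg (fun h => h2 h.2)]
        simp [hdlow, h2]
    · have ht : t ≠ t' := fun h => h1 (congrArg Fin.val h)
      rw [Matrix.diagonal_apply_ne _ ht, dif_neg (fun h => h1 h.1)]
  -- cancellation helpers (right-assoc forms)
  have hUcan : ∀ {k : ℕ} (X : Matrix (Fin m) (Fin k) ℝ), Uᵀ * (U * X) = X := by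
    intro k X; rw [← Matrix.mul_assoc, hU, Matrix.one_mul]
  have hVcan : ∀ {k : ℕ} (X : Matrix (Fin n) (Fin k) ℝ), Vᵀ * (V * X) = X := by
    intro k X; rw [← Matrix.mul_assoc, hV, Matrix.one_mul]
  have hEmdd : (delta em)ᵀ * delta em = 1 := delta_tr_delta em (by
    rw [hem]; exact Fin.castLE_injective hpm)
  have hEndd : (delta en)ᵀ * delta en = 1 := delta_tr_delta en (by
    rw [hen]; exact Fin.castLE_injective hpn)
  have hEmcan : ∀ {k : ℕ} (X : Matrix (Fin (min m n)) (Fin k) ℝ),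
      (delta em)ᵀ * (delta em * X) = X := by
    intro k X; rw [← Matrix.mul_assoc, hEmdd, Matrix.one_mul]
  have hEncan : ∀ {k : ℕ} (X : Matrix (Fin (min m n)) (Fin k) ℝ),
      (delta en)ᵀ * (delta en * X) = X := by
    intro k X; rw [← Matrix.mul_assoc, hEndd, Matrix.one_mul]
  have hJl' : ∀ {k : ℕ} (X : Matrix (Fin (min m n)) (Fin k) ℝ),
      delta c' * ((delta c')ᵀ * X) = Matrix.diagonal jl * X := by
    intro k X; rw [← Matrix.mul_assoc, hJlcore]
  have hmid' : ∀ {k : ℕ} (X : Matrix (Fin (min m n)) (Fin k) ℝ),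
      delta c' * (Matrix.diagonal (fun i : Fin r => s (Fin.castLE hrp.le i))
        * ((delta c')ᵀ * X)) = Matrix.diagonal dlow * X := by
    intro k X
    rw [← Matrix.mul_assoc, ← Matrix.mul_assoc, hmidcore]
  have hjs : ∀ {k : ℕ} (X : Matrix (Fin (min m n)) (Fin k) ℝ),
      Matrix.diagonal jl * (Matrix.diagonal s * X) = Matrix.diagonal dlow * X := by
    have hj : (fun t : Fin (min m n) => jl t * s t) = dlow := by
      funext t
      by_cases h : (t : ℕ) < r <;> simp [hjl, hdlow, h]
    intro k X
    rw [← Matrix.mul_assoc, Matrix.diagonal_mul_diagonal, hj]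
  have hsj : ∀ {k : ℕ} (X : Matrix (Fin (min m n)) (Fin k) ℝ),
      Matrix.diagonal s * (Matrix.diagonal jl * X) = Matrix.diagonal dlow * X := by
    have hj : (fun t : Fin (min m n) => s t * jl t) = dlow := by
      funext t
      by_cases h : (t : ℕ) < r <;> simp [hjl, hdlow, h]
    intro k X
    rw [← Matrix.mul_assoc, Matrix.diagonal_mul_diagonal, hj]
  -- the low-rank truncation in normal form
  have hlow : Ur * Urᵀ * A
      = U * (delta em * (Matrix.diagonal dlow * ((delta en)ᵀ * Vᵀ))) := by
    rw [hUrD, hsvd, hS', ← hcomp_m]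
    simp only [Matrix.transpose_mul, Matrix.mul_assoc]
    rw [hUcan, hEmcan, hJl', hjs]
  refine ⟨?_, ?_, ?_⟩
  · -- Ur Urᵀ A = A Vr Vrᵀ
    rw [hlow, hsvd, hS', hVrD, ← hcomp_n]
    simp only [Matrix.transpose_mul, Matrix.mul_assoc]
    rw [hVcan, hEncan, hJl', hsj]
  · -- Ur Urᵀ A = Ur Σr Vrᵀ
    rw [hlow, hUrD, hVrD, ← hcomp_m, ← hcomp_n]
    simp only [Matrix.transpose_mul, Matrix.mul_assoc]
    rw [hmid']
  · -- minimality
    intro B hrank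
    set W1 : Matrix (Fin m) (Fin (min m n)) ℝ := U * delta em with hW1
    set W2 : Matrix (Fin n) (Fin (min m n)) ℝ := V * delta en with hW2
    have h1 : W1ᵀ * W1 = 1 := by
      rw [hW1]
      simp only [Matrix.transpose_mul, Matrix.mul_assoc]
      rw [hUcan, hEmdd]
    have h2 : W2ᵀ * W2 = 1 := by
      rw [hW2]
      simp only [Matrix.transpose_mul, Matrix.mul_assoc]
      rw [hVcan, hEndd]
    have hA : A = W1 * Matrix.diagonal s * W2ᵀ := by
      rw [hsvd, hS', hW1, hW2]
      simp only [Matrix.transpose_mul, Matrix.mul_assoc]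
    have hDsub : Matrix.diagonal s - Matrix.diagonal dlow = Matrix.diagonal dhigh := by
      have heq : (fun t : Fin (min m n) => s t - dlow t) = dhigh := by
        funext t
        by_cases h : (t : ℕ) < r <;>
          simp [hdlow, hdhigh, h]
      rw [Matrix.diagonal_sub, heq]
    have hdiff : A - Ur * Urᵀ * A = W1 * Matrix.diagonal dhigh * W2ᵀ := by
      rw [hlow, hA, hW1, hW2]
      simp only [Matrix.transpose_mul, Matrix.mul_assoc]
      rw [← Matrix.mul_sub, ← Matrix.mul_sub, ← Matrix.sub_mul, hDsub]
    -- the projection matrix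
    obtain ⟨P, hPsym, hPidem, hPtr, hPB⟩ := exists_proj B hrank
    set N : Matrix (Fin (min m n)) (Fin (min m n)) ℝ := W1ᵀ * P * W1 with hN
    set Mm : Matrix (Fin m) (Fin m) ℝ := Uᵀ * P * U with hMm
    -- relate N and Mm
    have hNM : N = Mm.submatrix em em := by
      have e1 : Mm.submatrix em em = (delta em)ᵀ * Mm * delta em := by
        rw [delta_tr_mul, mul_delta, Matrix.submatrix_submatrix]
        rfl
      rw [e1, hN, hMm, hW1]
      simp only [Matrix.transpose_mul, Matrix.mul_assoc]
    -- diagonal bounds for N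
    have hN0 : ∀ t, 0 ≤ N t t := by
      intro t
      rw [hN, diag_conj]
      exact quad_nonneg hPsym hPidem _
    have hN1 : ∀ t, N t t ≤ 1 := by
      intro t
      rw [hN, diag_conj]
      refine le_trans (quad_le hPsym hPidem _) ?_
      have : (fun x => W1 x t) ⬝ᵥ (fun x => W1 x t) = (W1ᵀ * W1) t t := by
        simp [Matrix.mul_apply, dotProduct]
      rw [this, h1, Matrix.one_apply_eq]
    have hM0 : ∀ i, 0 ≤ Mm i i := by
      intro i
      rw [hMm, diag_conj]
      exact quad_nonneg hPsym hPidem _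
    have hNsum : ∑ t, N t t ≤ (r : ℝ) := by
      have step1 : ∑ t, N t t = ∑ i ∈ Finset.univ.map (Fin.castLEEmb hpm), Mm i i := by
        rw [Finset.sum_map]
        apply Finset.sum_congr rfl
        intro t _
        rw [hNM]
        rfl
      have step2 : ∑ i ∈ Finset.univ.map (Fin.castLEEmb hpm), Mm i i ≤ ∑ i, Mm i i := by
        apply Finset.sum_le_sum_of_subset_of_nonneg (Finset.subset_univ _)
        intro i _ _
        exact hM0 i
      have step3 : ∑ i, Mm i i = P.trace := by
        have : ∑ i, Mm i i = Mm.trace := by simp [Matrix.trace, Matrix.diag]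
        rw [this, hMm, Matrix.trace_mul_comm (Uᵀ * P) U, ← Matrix.mul_assoc, hUUt,
          Matrix.one_mul]
      calc ∑ t, N t t = ∑ i ∈ Finset.univ.map (Fin.castLEEmb hpm), Mm i i := step1
        _ ≤ ∑ i, Mm i i := step2
        _ = P.trace := step3
        _ ≤ (r : ℝ) := hPtr
    -- Frobenius computations
    apply frobNorm_mono
    have hPPA : ∀ X : Matrix (Fin m) (Fin n) ℝ, P * (P * X) = P * X := by
      intro X; rw [← Matrix.mul_assoc, hPidem]
    have hPB' : ∀ {k : ℕ}, True := fun {k} => trivial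
    have cross1 : (A - P * A)ᵀ * (P * A - B) = 0 := by
      simp only [Matrix.transpose_sub, Matrix.transpose_mul, hPsym, Matrix.sub_mul,
        Matrix.mul_sub, Matrix.mul_assoc, hPPA, hPB]
      abel
    have cross2 : (A - P * A)ᵀ * (P * A) = 0 := by
      simp only [Matrix.transpose_sub, Matrix.transpose_mul, hPsym, Matrix.sub_mul,
        Matrix.mul_sub, Matrix.mul_assoc, hPPA]
      abel
    have split1 : frobSq (A - B) = frobSq (A - P * A) + frobSq (P * A - B) := by
      have e : A - B = (A - P * A) + (P * A - B) := by abel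
      rw [e, frobSq_add _ _ cross1]
    have split2 : frobSq A = frobSq (A - P * A) + frobSq (P * A) := by
      have e : A = (A - P * A) + P * A := by abel
      conv_lhs => rw [e]
      rw [frobSq_add _ _ cross2]
    -- frobSq (P * A) in terms of N
    have hfPA : frobSq (P * A) = ∑ t, s t ^ 2 * N t t := by
      have e0 : P * A = (P * W1) * Matrix.diagonal s * W2ᵀ := by
        rw [hA]; simp only [Matrix.mul_assoc]
      rw [e0, frobSq_eq_trace]
      have e1 : ((P * W1) * Matrix.diagonal s * W2ᵀ)ᵀ * ((P * W1) * Matrix.diagonal s * W2ᵀ)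
          = W2 * (Matrix.diagonal s * N * Matrix.diagonal s) * W2ᵀ := by
        have hPP' : ∀ {k : ℕ} (X : Matrix (Fin m) (Fin k) ℝ), Pᵀ * (P * X) = P * X := by
          intro k X; rw [hPsym, ← Matrix.mul_assoc, hPidem]
        rw [hN]
        simp only [Matrix.transpose_mul, Matrix.transpose_transpose,
          Matrix.diagonal_transpose, Matrix.mul_assoc, hPP']
      rw [e1, trace_conj _ h2]
      simp only [Matrix.trace, Matrix.diag, Matrix.mul_apply, Matrix.diagonal_mul,
        Matrix.mul_diagonal]
      have : ∀ t, (Matrix.diagonal s * N * Matrix.diagonal s) t t = s t ^ 2 * N t t := by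
        intro t
        rw [Matrix.mul_diagonal, Matrix.diagonal_mul]
        ring
      calc (Matrix.diagonal s * N * Matrix.diagonal s).trace
          = ∑ t, (Matrix.diagonal s * N * Matrix.diagonal s) t t := by
            simp [Matrix.trace, Matrix.diag]
        _ = ∑ t, s t ^ 2 * N t t := Finset.sum_congr rfl fun t _ => this t
    have hfA : frobSq A = ∑ t, s t ^ 2 := by
      rw [hA, frobSq_conj _ _ h1 h2, Matrix.diagonal_transpose,
        Matrix.diagonal_mul_diagonal, Matrix.trace_diagonal]
      apply Finset.sum_congr rfl
      intro t _
      ring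
    have hfdiff : frobSq (A - Ur * Urᵀ * A)
        = ∑ t ∈ Finset.univ.filter (fun t : Fin (min m n) => ¬ (t : ℕ) < r), s t ^ 2 := by
      rw [hdiff, frobSq_conj _ _ h1 h2, Matrix.diagonal_transpose,
        Matrix.diagonal_mul_diagonal, Matrix.trace_diagonal]
      rw [← Finset.sum_filter_add_sum_filter_not Finset.univ
        (fun t : Fin (min m n) => (t : ℕ) < r)]
      have z1 : ∑ t ∈ Finset.univ.filter (fun t : Fin (min m n) => (t : ℕ) < r),
          dhigh t * dhigh t = 0 := by
        apply Finset.sum_eq_zero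
        intro t ht
        simp only [Finset.mem_filter] at ht
        simp [hdhigh, ht.2]
      rw [z1, zero_add]
      apply Finset.sum_congr rfl
      intro t ht
      simp only [Finset.mem_filter] at ht
      have hval : dhigh t = s t := by simp [hdhigh, ht.2]
      rw [hval]; ring
    have hsplitA : frobSq A
        = ∑ t ∈ Finset.univ.filter (fun t : Fin (min m n) => (t : ℕ) < r), s t ^ 2
        + ∑ t ∈ Finset.univ.filter (fun t : Fin (min m n) => ¬ (t : ℕ) < r), s t ^ 2 := by
      rw [hfA, Finset.sum_filter_add_sum_filter_not]
    have hcomb : ∑ t, s t ^ 2 * N t t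
        ≤ ∑ t ∈ Finset.univ.filter (fun t : Fin (min m n) => (t : ℕ) < r), s t ^ 2 :=
      comb hrp s (fun t => N t t) hmono hpos hN0 hN1 hNsum
    have hfPAB : 0 ≤ frobSq (P * A - B) := frobSq_nonneg _
    linarith [split1, split2, hfPA, hsplitA, hcomb, hfdiff]
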